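/- Let X be a zero mean fourth-order stationary time series satisfying γ = Σ_{ℓ∈ℤ} R(ℓ)² < ∞ and κ₄ = Σ_{i,j,k} |κ₄(i,j,k)| < ∞. Then for every n ≥ 1, n · sup_{ℓ≥0} Var(R̂_n(ℓ)) ≤ κ₄ + 2γ, where R̂_n(ℓ) = (1/n) Σ_{j=1∨(1−ℓ)}^{(n−ℓ)∧n} X_j X_{j+ℓ} is the empirical covariance. -/

import Mathlib

open MeasureTheory Filter

set_option maxHeartbeats 2000000 in
/-- under Assumption M, `n · sup_{ℓ≥0} Var(R̂_n ℓ) ≤ κ₄ + 2γ`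
where `R̂_n(ℓ) = (1/n) Σ_{j=1∨(1−ℓ)}^{(n−ℓ)∧n} X_j X_{j+ℓ}`. -/
theorem stmt1
    {Ω : Type*} [MeasurableSpace Ω] (μ : Measure Ω) [IsProbabilityMeasure μ]
    (X : ℤ → Ω → ℝ) (R : ℤ → ℝ) (κ4 : ℤ → ℤ → ℤ → ℝ)
    (hmeas : ∀ i, Measurable (X i))
    (hint4 : ∀ i j k l : ℤ, Integrable (fun ω => X i ω * X j ω * X k ω * X l ω) μ)
    (hint2 : ∀ i j : ℤ, Integrable (fun ω => X i ω * X j ω) μ)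
    (hzero : ∀ i : ℤ, ∫ ω, X i ω ∂μ = 0)
    (hR : ∀ s : ℤ, R s = ∫ ω, X 0 ω * X s ω ∂μ)
    (hstat2 : ∀ t s : ℤ, ∫ ω, X t ω * X (t + s) ω ∂μ = R s)
    (hstat4 : ∀ t i j k : ℤ,
      ∫ ω, X t ω * X (t + i) ω * X (t + j) ω * X (t + k) ω ∂μ
        = ∫ ω, X 0 ω * X i ω * X j ω * X k ω ∂μ)
    (hκ : ∀ i j k : ℤ, κ4 i j k
        = (∫ ω, X 0 ω * X i ω * X j ω * X k ω ∂μ)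
          - R i * R (k - j) - R j * R (k - i) - R k * R (j - i))
    (hγ : Summable (fun ℓ : ℤ => R ℓ ^ 2))
    (hκsum : Summable (fun t : ℤ × ℤ × ℤ => |κ4 t.1 t.2.1 t.2.2|))
    (Rhat : ℕ → ℤ → Ω → ℝ)
    (hRhat : ∀ (n : ℕ) (ℓ : ℤ) (ω : Ω), Rhat n ℓ ω
      = (n : ℝ)⁻¹ * ∑ j ∈ Finset.Icc (max 1 (1 - ℓ)) (min ((n : ℤ) - ℓ) (n : ℤ)),
          X j ω * X (j + ℓ) ω) :
    ∀ n : ℕ, 1 ≤ n → ∀ ℓ : ℤ, 0 ≤ ℓ →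
      (n : ℝ) * ∫ ω, (Rhat n ℓ ω - ∫ ω', Rhat n ℓ ω' ∂μ) ^ 2 ∂μ
        ≤ (∑' t : ℤ × ℤ × ℤ, |κ4 t.1 t.2.1 t.2.2|) + 2 * ∑' ℓ' : ℤ, R ℓ' ^ 2 := by
  intro n hn ℓ hℓ
  classical
  have hnpos : (0:ℝ) < (n:ℝ) := by exact_mod_cast hn
  have hn0 : (n:ℝ) ≠ 0 := ne_of_gt hnpos
  set s : Finset ℤ := Finset.Icc (max 1 (1 - ℓ)) (min ((n : ℤ) - ℓ) (n : ℤ)) with hsdef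
  -- integrability facts
  have If : ∀ j : ℤ, Integrable (fun ω => X j ω * X (j + ℓ) ω) μ := fun j => hint2 j (j + ℓ)
  have Iff : ∀ j j' : ℤ,
      Integrable (fun ω => (X j ω * X (j + ℓ) ω) * (X j' ω * X (j' + ℓ) ω)) μ := by
    intro j j'
    have h1 : (fun ω => (X j ω * X (j + ℓ) ω) * (X j' ω * X (j' + ℓ) ω))
        = fun ω => X j ω * X (j + ℓ) ω * X j' ω * X (j' + ℓ) ω := by
      funext ω; ring
    rw [h1]; exact hint4 _ _ _ _
  set g : ℤ → Ω → ℝ := fun j ω => X j ω * X (j + ℓ) ω - R ℓ with hgdef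
  have hgexp : ∀ j j' : ℤ, (fun ω => g j ω * g j' ω)
      = fun ω => ((X j ω * X (j + ℓ) ω) * (X j' ω * X (j' + ℓ) ω)
          - R ℓ * (X j ω * X (j + ℓ) ω) - R ℓ * (X j' ω * X (j' + ℓ) ω)) + R ℓ * R ℓ := by
    intro j j'; funext ω; simp only [hgdef]; ring
  have Igg : ∀ j j', Integrable (fun ω => g j ω * g j' ω) μ := by
    intro j j'
    rw [hgexp j j']
    exact (((Iff j j').sub ((If j).const_mul _)).sub ((If j').const_mul _)).add
      (integrable_const _)
  have hEf : ∀ j : ℤ, ∫ ω, X j ω * X (j + ℓ) ω ∂μ = R ℓ := fun j => hstat2 j ℓ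
  have Icov : ∀ j j' : ℤ, ∫ ω, g j ω * g j' ω ∂μ
      = (∫ ω, (X j ω * X (j + ℓ) ω) * (X j' ω * X (j' + ℓ) ω) ∂μ) - R ℓ * R ℓ := by
    intro j j'
    have A1 : Integrable (fun ω => X j ω * X (j + ℓ) ω * (X j' ω * X (j' + ℓ) ω)
        - R ℓ * (X j ω * X (j + ℓ) ω)) μ := (Iff j j').sub ((If j).const_mul _)
    have A2 : Integrable (fun ω => X j ω * X (j + ℓ) ω * (X j' ω * X (j' + ℓ) ω)
        - R ℓ * (X j ω * X (j + ℓ) ω) - R ℓ * (X j' ω * X (j' + ℓ) ω)) μ :=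
      A1.sub ((If j').const_mul _)
    rw [hgexp j j',
      integral_add A2 (integrable_const _),
      integral_sub A1 ((If j').const_mul _),
      integral_sub (Iff j j') ((If j).const_mul _),
      integral_const_mul, integral_const_mul, hEf, hEf, integral_const]
    simp [measure_univ]
  have hCov : ∀ j d : ℤ, ∫ ω, g j ω * g (j + d) ω ∂μ
      = κ4 ℓ d (d + ℓ) + R d ^ 2 + R (d + ℓ) * R (d - ℓ) := by
    intro j d
    rw [Icov]
    have h4 : (fun ω => (X j ω * X (j + ℓ) ω) * (X (j + d) ω * X (j + d + ℓ) ω))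
        = fun ω => X j ω * X (j + ℓ) ω * X (j + d) ω * X (j + (d + ℓ)) ω := by
      funext ω
      rw [show j + (d + ℓ) = j + d + ℓ from by ring]
      ring
    rw [h4, hstat4 j ℓ d (d + ℓ)]
    have hk := hκ ℓ d (d + ℓ)
    rw [show d + ℓ - d = ℓ from by ring, show d + ℓ - ℓ = d from by ring] at hk
    rw [hk]
    ring
  -- the dominating summable function
  set h : ℤ → ℝ := fun d => |κ4 ℓ d (d + ℓ)| + R d ^ 2 + |R (d + ℓ)| * |R (d - ℓ)| with hhdef
  have hpos : ∀ d, 0 ≤ h d := by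
    intro d; simp only [hhdef]; positivity
  have hbound : ∀ j j' : ℤ, ∫ ω, g j ω * g j' ω ∂μ ≤ h (j' - j) := by
    intro j j'
    obtain ⟨d, rfl⟩ : ∃ d, j' = j + d := ⟨j' - j, by ring⟩
    rw [hCov j d, show j + d - j = d from by ring]
    have h1 := le_abs_self (κ4 ℓ d (d + ℓ))
    have h2 := le_abs_self (R (d + ℓ) * R (d - ℓ))
    rw [abs_mul] at h2
    simp only [hhdef]
    linarith
  -- summability
  have hinj : Function.Injective (fun d : ℤ => ((ℓ, d, d + ℓ) : ℤ × ℤ × ℤ)) := by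
    intro a b hab
    simpa using congrArg (fun t : ℤ × ℤ × ℤ => t.2.1) hab
  have Sh1 : Summable (fun d : ℤ => |κ4 ℓ d (d + ℓ)|) := hκsum.comp_injective hinj
  have hip : Function.Injective (fun d : ℤ => d + ℓ) := fun a b hab => by simpa using hab
  have him : Function.Injective (fun d : ℤ => d - ℓ) := fun a b hab => by
    have : a - ℓ = b - ℓ := hab
    omega
  have SRp : Summable (fun d : ℤ => R (d + ℓ) ^ 2) := hγ.comp_injective hip
  have SRm : Summable (fun d : ℤ => R (d - ℓ) ^ 2) := hγ.comp_injective him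
  have hABle : ∀ d : ℤ, |R (d + ℓ)| * |R (d - ℓ)| ≤ (R (d + ℓ) ^ 2 + R (d - ℓ) ^ 2) / 2 := by
    intro d
    have := two_mul_le_add_sq |R (d + ℓ)| |R (d - ℓ)|
    rw [sq_abs, sq_abs] at this
    linarith
  have Sh3 : Summable (fun d : ℤ => |R (d + ℓ)| * |R (d - ℓ)|) :=
    Summable.of_nonneg_of_le (fun d => by positivity) hABle ((SRp.add SRm).div_const 2)
  have Sh : Summable h := (Sh1.add hγ).add Sh3
  -- tsum bounds
  have T1 : ∑' d : ℤ, |κ4 ℓ d (d + ℓ)| ≤ ∑' t : ℤ × ℤ × ℤ, |κ4 t.1 t.2.1 t.2.2| :=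
    Summable.tsum_le_tsum_of_inj _ hinj (fun c _ => abs_nonneg _) (fun d => le_rfl) Sh1 hκsum
  have Tp : ∑' d : ℤ, R (d + ℓ) ^ 2 = ∑' d : ℤ, R d ^ 2 :=
    (Equiv.addRight ℓ).tsum_eq (fun x => R x ^ 2)
  have Tm : ∑' d : ℤ, R (d - ℓ) ^ 2 = ∑' d : ℤ, R d ^ 2 :=
    (Equiv.subRight ℓ).tsum_eq (fun x => R x ^ 2)
  have T3 : ∑' d : ℤ, |R (d + ℓ)| * |R (d - ℓ)| ≤ ∑' d : ℤ, R d ^ 2 := by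
    calc ∑' d : ℤ, |R (d + ℓ)| * |R (d - ℓ)|
        ≤ ∑' d : ℤ, (R (d + ℓ) ^ 2 + R (d - ℓ) ^ 2) / 2 :=
          Summable.tsum_le_tsum hABle Sh3 ((SRp.add SRm).div_const 2)
      _ = ((∑' d : ℤ, R (d + ℓ) ^ 2) + ∑' d : ℤ, R (d - ℓ) ^ 2) / 2 := by
          rw [tsum_div_const, Summable.tsum_add SRp SRm]
      _ = ∑' d : ℤ, R d ^ 2 := by rw [Tp, Tm]; ring
  have Th : ∑' d : ℤ, h d
      ≤ (∑' t : ℤ × ℤ × ℤ, |κ4 t.1 t.2.1 t.2.2|) + 2 * ∑' ℓ' : ℤ, R ℓ' ^ 2 := by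
    have : ∑' d : ℤ, h d = (∑' d : ℤ, |κ4 ℓ d (d + ℓ)|) + (∑' d : ℤ, R d ^ 2)
        + ∑' d : ℤ, |R (d + ℓ)| * |R (d - ℓ)| := by
      simp only [hhdef]
      rw [Summable.tsum_add (Sh1.add hγ) Sh3, Summable.tsum_add Sh1 hγ]
    rw [this]
    linarith
  -- per row bound
  have row : ∀ j : ℤ, ∑ j' ∈ s, h (j' - j) ≤ ∑' d : ℤ, h d := by
    intro j
    have himg : ∑ j' ∈ s, h (j' - j) = ∑ d ∈ s.image (fun j' => j' - j), h d := by
      rw [Finset.sum_image (by intro a _ b _ hab; have : a - j = b - j := hab; omega)]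
    rw [himg]
    exact Summable.sum_le_tsum _ (fun d _ => hpos d) Sh
  -- expectation of Rhat
  set m : ℝ := ∫ ω', Rhat n ℓ ω' ∂μ with hmdef
  have hm : m = (n:ℝ)⁻¹ * ((s.card : ℝ) * R ℓ) := by
    rw [hmdef]
    calc ∫ ω', Rhat n ℓ ω' ∂μ
        = ∫ ω, (n:ℝ)⁻¹ * ∑ j ∈ s, X j ω * X (j + ℓ) ω ∂μ := by
          simp only [hRhat n ℓ, ← hsdef]
      _ = (n:ℝ)⁻¹ * ∑ j ∈ s, ∫ ω, X j ω * X (j + ℓ) ω ∂μ := by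
          rw [integral_const_mul, integral_finset_sum s (fun j _ => If j)]
      _ = (n:ℝ)⁻¹ * ((s.card : ℝ) * R ℓ) := by
          simp [hEf, Finset.sum_const, nsmul_eq_mul]
  have hpt : ∀ ω, (Rhat n ℓ ω - m) ^ 2 = ((n:ℝ)⁻¹) ^ 2 * (∑ j ∈ s, g j ω) ^ 2 := by
    intro ω
    have hsum : ∑ j ∈ s, g j ω
        = (∑ j ∈ s, X j ω * X (j + ℓ) ω) - (s.card : ℝ) * R ℓ := by
      simp only [hgdef]
      rw [Finset.sum_sub_distrib]
      simp [Finset.sum_const, nsmul_eq_mul]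
    rw [hRhat n ℓ ω, ← hsdef, hm, hsum]
    ring
  have hsq : ∀ ω, (∑ j ∈ s, g j ω) ^ 2 = ∑ j ∈ s, ∑ j' ∈ s, g j ω * g j' ω := by
    intro ω; rw [sq, Finset.sum_mul_sum]
  have hVar : ∫ ω, (Rhat n ℓ ω - m) ^ 2 ∂μ
      = ((n:ℝ)⁻¹) ^ 2 * ∑ j ∈ s, ∑ j' ∈ s, ∫ ω, g j ω * g j' ω ∂μ := by
    calc ∫ ω, (Rhat n ℓ ω - m) ^ 2 ∂μ
        = ∫ ω, ((n:ℝ)⁻¹) ^ 2 * (∑ j ∈ s, g j ω) ^ 2 ∂μ := by simp only [hpt]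
      _ = ((n:ℝ)⁻¹) ^ 2 * ∫ ω, (∑ j ∈ s, g j ω) ^ 2 ∂μ := integral_const_mul _ _
      _ = ((n:ℝ)⁻¹) ^ 2 * ∫ ω, ∑ j ∈ s, ∑ j' ∈ s, g j ω * g j' ω ∂μ := by
          simp only [hsq]
      _ = ((n:ℝ)⁻¹) ^ 2 * ∑ j ∈ s, ∑ j' ∈ s, ∫ ω, g j ω * g j' ω ∂μ := by
          rw [integral_finset_sum s (fun j _ => integrable_finset_sum s (fun j' _ => Igg j j'))]
          congr 1
          exact Finset.sum_congr rfl fun j _ => integral_finset_sum s fun j' _ => Igg j j'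
  -- the double sum bound
  set T : ℝ := ∑' d : ℤ, h d with hTdef
  have hTnn : 0 ≤ T := tsum_nonneg hpos
  have hS : ∑ j ∈ s, ∑ j' ∈ s, ∫ ω, g j ω * g j' ω ∂μ ≤ (s.card : ℝ) * T := by
    calc ∑ j ∈ s, ∑ j' ∈ s, ∫ ω, g j ω * g j' ω ∂μ
        ≤ ∑ j ∈ s, ∑ j' ∈ s, h (j' - j) :=
          Finset.sum_le_sum fun j _ => Finset.sum_le_sum fun j' _ => hbound j j'
      _ ≤ ∑ _j ∈ s, T := Finset.sum_le_sum fun j _ => row j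
      _ = (s.card : ℝ) * T := by simp [Finset.sum_const, nsmul_eq_mul]
  have hcard : (s.card : ℝ) ≤ (n : ℝ) := by
    have hb : min ((n:ℤ) - ℓ) (n:ℤ) + 1 - max 1 (1 - ℓ) ≤ (n : ℤ) := by
      have h1 : min ((n:ℤ) - ℓ) (n:ℤ) ≤ (n:ℤ) := min_le_right _ _
      have h2 : (1:ℤ) ≤ max 1 (1 - ℓ) := le_max_left _ _
      omega
    have : s.card ≤ n := by
      rw [hsdef, Int.card_Icc]
      exact_mod_cast Int.toNat_le.mpr hb
    exact_mod_cast this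
  -- finish
  rw [hVar]
  have step1 : (n:ℝ) * (((n:ℝ)⁻¹) ^ 2 * ∑ j ∈ s, ∑ j' ∈ s, ∫ ω, g j ω * g j' ω ∂μ)
      ≤ (n:ℝ) * (((n:ℝ)⁻¹) ^ 2 * ((s.card : ℝ) * T)) := by
    have := mul_le_mul_of_nonneg_left hS (by positivity : (0:ℝ) ≤ ((n:ℝ)⁻¹) ^ 2)
    exact mul_le_mul_of_nonneg_left this (le_of_lt hnpos)
  have step2 : (n:ℝ) * (((n:ℝ)⁻¹) ^ 2 * ((s.card : ℝ) * T)) = ((s.card : ℝ) / (n:ℝ)) * T := by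
    field_simp
  have step3 : ((s.card : ℝ) / (n:ℝ)) * T ≤ T := by
    have hle : (s.card : ℝ) / (n:ℝ) ≤ 1 := (div_le_one hnpos).mpr hcard
    calc ((s.card : ℝ) / (n:ℝ)) * T ≤ 1 * T := mul_le_mul_of_nonneg_right hle hTnn
      _ = T := one_mul T
  calc (n:ℝ) * (((n:ℝ)⁻¹) ^ 2 * ∑ j ∈ s, ∑ j' ∈ s, ∫ ω, g j ω * g j' ω ∂μ)
      ≤ ((s.card : ℝ) / (n:ℝ)) * T := by rw [← step2]; exact step1
    _ ≤ T := step3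
    _ ≤ _ := Th
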